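/- Arslanov's completeness criterion for precomplete numberings: if A ⊆ ℕ is a computably enumerable set that is Turing incomplete (∅' is not Turing reducible to A) and γ is a precomplete numbering, then every total A-computable function f: ℕ → ℕ has a fixpoint modulo γ, i.e. there is an n ∈ ℕ with f(n) ∼_γ n. -/

import Mathlib

open Nat Part

/-- Partial functions on `ℕ` computable relative to an oracle set `A`. -/
inductive RecursiveInSet (A : Set ℕ) : (ℕ →. ℕ) → Prop
  | zero : RecursiveInSet A (pure 0)
  | succ : RecursiveInSet A ↑Nat.succ
  | left : RecursiveInSet A ↑fun n : ℕ => n.unpair.1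
  | right : RecursiveInSet A ↑fun n : ℕ => n.unpair.2
  | oracle : RecursiveInSet A ↑fun n : ℕ => A.indicator 1 n
  | pair {f g} : RecursiveInSet A f → RecursiveInSet A g →
      RecursiveInSet A fun n => Nat.pair <$> f n <*> g n
  | comp {f g} : RecursiveInSet A f → RecursiveInSet A g →
      RecursiveInSet A fun n => g n >>= f
  | prec {f g} : RecursiveInSet A f → RecursiveInSet A g →
      RecursiveInSet A (Nat.unpaired fun a n =>
        n.rec (f a) fun y IH => do let i ← IH; g (Nat.pair a (Nat.pair y i)))
  | rfind {f} : RecursiveInSet A f →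
      RecursiveInSet A fun a => Nat.rfind fun n => (fun m => m = 0) <$> f (Nat.pair a n)

/-- A total function `f : ℕ → ℕ` is `A`-computable. -/
def ComputableInSet (A : Set ℕ) (f : ℕ → ℕ) : Prop :=
  RecursiveInSet A fun n => Part.some (f n)

/-- A total binary function is `A`-computable. -/
def ComputableInSet₂ (A : Set ℕ) (h : ℕ → ℕ → ℕ) : Prop :=
  ComputableInSet A fun n => h n.unpair.1 n.unpair.2

/-- The characteristic function of a set of naturals. -/
noncomputable def chi (A : Set ℕ) : ℕ → ℕ := A.indicator 1

/-- Turing reducibility: `A ≤_T B`. -/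
def TuringLE (A B : Set ℕ) : Prop := ComputableInSet B (chi A)

/-- `A` is computable. -/
def SetComputable (A : Set ℕ) : Prop := ComputableInSet ∅ (chi A)

/-- `X` is computably enumerable in `A`: `X` is the domain of a partial
`A`-computable function. -/
def CEIn (A : Set ℕ) (X : Set ℕ) : Prop :=
  ∃ p : ℕ →. ℕ, RecursiveInSet A p ∧ X = p.Dom

/-- `A ≤_γ B` (`A` is `(γ,B)`-low): every total `A`-computable function has a
`B`-computable `γ`-lift. -/
def GammaLE (γ : ℕ → ℕ → Prop) (A B : Set ℕ) : Prop :=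
  ∀ f : ℕ → ℕ, ComputableInSet A f →
    ∃ g : ℕ → ℕ, ComputableInSet B g ∧ ∀ n, γ (f n) (g n)

/-- `A` is `γ`-low: `A ≤_γ ∅`. -/
def GammaLow (γ : ℕ → ℕ → Prop) (A : Set ℕ) : Prop := GammaLE γ A ∅

/-- `γ` is `(n, A)`-divisible (for finite `n`). -/
def DivisibleFin (γ : ℕ → ℕ → Prop) (n : ℕ) (A : Set ℕ) : Prop :=
  ∃ (x : Fin n → ℕ) (X : Fin n → Set ℕ),
    (∀ i, CEIn A (X i)) ∧
    (∀ i, {m | γ (x i) m} ⊆ X i) ∧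
    (∀ i j, i ≠ j → {m | γ (x i) m} ∩ X j = ∅)

/-- `γ` is `(ω, A)`-divisible. -/
def DivisibleOmega (γ : ℕ → ℕ → Prop) (A : Set ℕ) : Prop :=
  ∃ (x : ℕ → ℕ) (X : ℕ → Set ℕ),
    ComputableInSet A x ∧
    CEIn A {k : ℕ | k.unpair.2 ∈ X k.unpair.1} ∧
    (∀ i, {m | γ (x i) m} ⊆ X i) ∧
    (∀ i j, i ≠ j → {m | γ (x i) m} ∩ X j = ∅)

/-- `γ` is `A`-precomplete: every partial `A`-computable function has a total
`A`-computable totalization modulo `γ`. -/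
def PrecompleteIn (γ : ℕ → ℕ → Prop) (A : Set ℕ) : Prop :=
  ∀ ψ : ℕ →. ℕ, RecursiveInSet A ψ →
    ∃ f : ℕ → ℕ, ComputableInSet A f ∧ ∀ n, ∀ y ∈ ψ n, γ y (f n)

/-- `γ` is a c.e. numbering. -/
def CENumbering (γ : ℕ → ℕ → Prop) : Prop :=
  CEIn ∅ {k : ℕ | γ k.unpair.1 k.unpair.2}

/-- The `e`-th partial computable function. -/
def phi (e : ℕ) : ℕ →. ℕ := (Denumerable.ofNat Nat.Partrec.Code e).eval

/-- The `e`-th computably enumerable set. -/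
def Wset (e : ℕ) : Set ℕ := (phi e).Dom

/-- The halting set `∅'`. -/
def halting : Set ℕ := {e : ℕ | (phi e e).Dom}


inductive Codeo : Type
  | zero | succ | left | right | oracle
  | pair : Codeo → Codeo → Codeo
  | comp : Codeo → Codeo → Codeo
  | prec : Codeo → Codeo → Codeo
  | rfind : Codeo → Codeo

def evalo (O : ℕ →. ℕ) : Codeo → ℕ →. ℕ
  | .zero => pure 0
  | .succ => ↑Nat.succ
  | .left => ↑fun n : ℕ => n.unpair.1
  | .right => ↑fun n : ℕ => n.unpair.2
  | .oracle => O
  | .pair cf cg => fun n => Nat.pair <$> evalo O cf n <*> evalo O cg n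
  | .comp cf cg => fun n => evalo O cg n >>= evalo O cf
  | .prec cf cg => Nat.unpaired fun a n =>
      n.rec (evalo O cf a) fun y IH => do let i ← IH; evalo O cg (Nat.pair a (Nat.pair y i))
  | .rfind cf => fun a => Nat.rfind fun n => (fun m => m = 0) <$> evalo O cf (Nat.pair a n)

theorem mem_seq_pair {u v : Part ℕ} {x : ℕ} :
    x ∈ (Nat.pair <$> u <*> v) ↔ ∃ a ∈ u, ∃ b ∈ v, x = Nat.pair a b := by
  simp [Seq.seq, Part.mem_bind_iff, Part.mem_map_iff, eq_comm]

theorem evalo_mono {O O' : ℕ →. ℕ} (h : ∀ i x, x ∈ O i → x ∈ O' i) :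
    ∀ (c : Codeo) (n x : ℕ), x ∈ evalo O c n → x ∈ evalo O' c n := by
  intro c
  induction c with
  | zero => exact fun n x h => h
  | succ => exact fun n x h => h
  | left => exact fun n x h => h
  | right => exact fun n x h => h
  | oracle => exact h
  | pair cf cg ihf ihg =>
    intro n x hx
    rw [evalo, mem_seq_pair] at hx ⊢
    obtain ⟨a, ha, b, hb, rfl⟩ := hx
    exact ⟨a, ihf _ _ ha, b, ihg _ _ hb, rfl⟩
  | comp cf cg ihf ihg =>
    intro n x hx
    rw [evalo] at hx ⊢
    obtain ⟨a, ha, hb⟩ := Part.mem_bind_iff.1 hx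
    exact Part.mem_bind_iff.2 ⟨a, ihg _ _ ha, ihf _ _ hb⟩
  | prec cf cg ihf ihg =>
    intro n
    simp only [evalo, Nat.unpaired]
    induction n.unpair.2 with
    | zero => exact fun x hx => ihf _ _ hx
    | succ m ih =>
      intro x hx
      simp only [Part.bind_eq_bind, Part.mem_bind_iff] at hx ⊢
      obtain ⟨i, hi, hx⟩ := hx
      exact ⟨i, ih _ hi, ihg _ _ hx⟩
  | rfind cf ihf =>
    intro n x hx
    simp only [evalo] at hx ⊢
    replace hx := Nat.mem_rfind.1 hx
    refine Nat.mem_rfind.2 ?_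
    simp only [Part.map_eq_map, Part.mem_map_iff] at hx ⊢
    obtain ⟨⟨a, ha, hdec⟩, hmin⟩ := hx
    refine ⟨⟨a, ihf _ _ ha, hdec⟩, ?_⟩
    intro m hm
    obtain ⟨b, hb, hdec'⟩ := hmin hm
    exact ⟨b, ihf _ _ hb, hdec'⟩

/-- restrict a partial oracle to inputs `< l` -/
def restr (O : ℕ →. ℕ) (l : ℕ) : ℕ →. ℕ := fun i => if i < l then O i else Part.none

theorem restr_le (O : ℕ →. ℕ) (l : ℕ) : ∀ i x, x ∈ restr O l i → x ∈ O i := by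
  intro i x hx
  by_cases h : i < l <;> simp [restr, h] at hx
  exact hx

theorem restr_mono (O : ℕ →. ℕ) {l l' : ℕ} (h : l ≤ l') :
    ∀ i x, x ∈ restr O l i → x ∈ restr O l' i := by
  intro i x hx
  by_cases hi : i < l <;> simp [restr, hi] at hx
  simp [restr, lt_of_lt_of_le hi h, hx]

theorem evalo_use {O : ℕ →. ℕ} :
    ∀ (c : Codeo) (n x : ℕ), x ∈ evalo O c n → ∃ l, x ∈ evalo (restr O l) c n := by
  intro c
  induction c with
  | zero => exact fun n x h => ⟨0, h⟩
  | succ => exact fun n x h => ⟨0, h⟩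
  | left => exact fun n x h => ⟨0, h⟩
  | right => exact fun n x h => ⟨0, h⟩
  | oracle => exact fun n x h => ⟨n + 1, by simpa [evalo, restr, Nat.lt_succ_self] using h⟩
  | pair cf cg ihf ihg =>
    intro n x hx
    rw [evalo, mem_seq_pair] at hx
    obtain ⟨a, ha, b, hb, rfl⟩ := hx
    obtain ⟨l₁, h₁⟩ := ihf _ _ ha
    obtain ⟨l₂, h₂⟩ := ihg _ _ hb
    refine ⟨max l₁ l₂, ?_⟩
    rw [evalo, mem_seq_pair]
    exact ⟨a, evalo_mono (restr_mono O (le_max_left _ _)) _ _ _ h₁,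
      b, evalo_mono (restr_mono O (le_max_right _ _)) _ _ _ h₂, rfl⟩
  | comp cf cg ihf ihg =>
    intro n x hx
    rw [evalo] at hx
    obtain ⟨a, ha, hb⟩ := Part.mem_bind_iff.1 hx
    obtain ⟨l₁, h₁⟩ := ihg _ _ ha
    obtain ⟨l₂, h₂⟩ := ihf _ _ hb
    refine ⟨max l₁ l₂, ?_⟩
    simp only [evalo]
    exact Part.mem_bind_iff.2 ⟨a, evalo_mono (restr_mono O (le_max_left _ _)) _ _ _ h₁,
      evalo_mono (restr_mono O (le_max_right _ _)) _ _ _ h₂⟩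
  | prec cf cg ihf ihg =>
    intro n
    simp only [evalo, Nat.unpaired]
    induction n.unpair.2 with
    | zero => exact fun x hx => ihf _ _ hx
    | succ m ih =>
      intro x hx
      simp only [Part.bind_eq_bind, Part.mem_bind_iff] at hx
      obtain ⟨i, hi, hx⟩ := hx
      obtain ⟨l₁, h₁⟩ := ih _ hi
      obtain ⟨l₂, h₂⟩ := ihg _ _ hx
      refine ⟨max l₁ l₂, ?_⟩
      simp only [Part.bind_eq_bind, Part.mem_bind_iff]
      refine ⟨i, ?_, evalo_mono (restr_mono O (le_max_right _ _)) _ _ _ h₂⟩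
      -- need mono lemma for the inner rec; reuse evalo_mono on prec code
      have := evalo_mono (restr_mono O (le_max_left l₁ l₂)) (Codeo.prec cf cg)
        (Nat.pair n.unpair.1 m) i
      simp only [evalo, Nat.unpaired, Nat.unpair_pair] at this
      exact this h₁
  | rfind cf ihf =>
    intro n x hx
    simp only [evalo] at hx
    replace hx := Nat.mem_rfind.1 hx
    simp only [Part.map_eq_map, Part.mem_map_iff] at hx
    obtain ⟨⟨a, ha, hdec⟩, hmin⟩ := hx
    classical
    -- choose a bound for each m ≤ x
    have H : ∀ m : ℕ, m < x → ∃ l, ∃ b, b ∈ evalo (restr O l) cf (Nat.pair n m) ∧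
        (decide (b = 0)) = false := by
      intro m hm
      obtain ⟨b, hb, hdec'⟩ := hmin hm
      obtain ⟨l, hl⟩ := ihf _ _ hb
      exact ⟨l, b, hl, hdec'⟩
    choose lf bf hbf hdf using H
    obtain ⟨l₀, hl₀⟩ := ihf _ _ ha
    refine ⟨max l₀ ((Finset.range x).sup fun m => if h : m < x then lf m h else 0), ?_⟩
    simp only [evalo]
    refine Nat.mem_rfind.2 ?_
    simp only [Part.map_eq_map, Part.mem_map_iff]
    constructor
    · exact ⟨a, evalo_mono (restr_mono O (le_max_left _ _)) _ _ _ hl₀, hdec⟩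
    · intro m hm
      refine ⟨bf m hm, ?_, hdf m hm⟩
      refine evalo_mono (restr_mono O ?_) _ _ _ (hbf m hm)
      refine le_trans ?_ (le_max_right _ _)
      have : m ∈ Finset.range x := Finset.mem_range.2 hm
      have := Finset.le_sup (f := fun m => if h : m < x then lf m h else 0) this
      simpa [hm] using this

theorem exists_codeo {A : Set ℕ} {f : ℕ →. ℕ} (h : RecursiveInSet A f) :
    ∃ c : Codeo, evalo (↑(chi A) : ℕ →. ℕ) c = f := by
  induction h with
  | zero => exact ⟨Codeo.zero, rfl⟩
  | succ => exact ⟨Codeo.succ, rfl⟩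
  | left => exact ⟨Codeo.left, rfl⟩
  | right => exact ⟨Codeo.right, rfl⟩
  | oracle =>
    refine ⟨Codeo.oracle, funext fun n => ?_⟩
    show (↑(chi A) : ℕ →. ℕ) n = A.indicator 1 n
    by_cases h : n ∈ A
    · rw [Set.indicator_of_mem h]
      have : chi A n = 1 := by simp [chi, Set.indicator_of_mem h]
      rw [show ((↑(chi A) : ℕ →. ℕ) n) = Part.some (chi A n) from rfl, this]; rfl
    · rw [Set.indicator_of_notMem h]
      have : chi A n = 0 := by simp [chi, Set.indicator_of_notMem h]
      rw [show ((↑(chi A) : ℕ →. ℕ) n) = Part.some (chi A n) from rfl, this]; rfl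
  | pair hf hg ihf ihg =>
    obtain ⟨cf, rfl⟩ := ihf; obtain ⟨cg, rfl⟩ := ihg
    exact ⟨Codeo.pair cf cg, rfl⟩
  | comp hf hg ihf ihg =>
    obtain ⟨cf, rfl⟩ := ihf; obtain ⟨cg, rfl⟩ := ihg
    exact ⟨Codeo.comp cf cg, rfl⟩
  | prec hf hg ihf ihg =>
    obtain ⟨cf, rfl⟩ := ihf; obtain ⟨cg, rfl⟩ := ihg
    exact ⟨Codeo.prec cf cg, rfl⟩
  | rfind hf ihf =>
    obtain ⟨cf, rfl⟩ := ihf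
    exact ⟨Codeo.rfind cf, rfl⟩

/-- plain partial recursive functions are `A`-recursive for every `A` -/
theorem RecursiveInSet.of_partrec {A : Set ℕ} {f : ℕ →. ℕ} (h : Nat.Partrec f) :
    RecursiveInSet A f := by
  induction h with
  | zero => exact RecursiveInSet.zero
  | succ => exact RecursiveInSet.succ
  | left => exact RecursiveInSet.left
  | right => exact RecursiveInSet.right
  | pair hf hg ihf ihg => exact RecursiveInSet.pair ihf ihg
  | comp hf hg ihf ihg => exact RecursiveInSet.comp ihf ihg
  | prec hf hg ihf ihg => exact RecursiveInSet.prec ihf ihg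
  | rfind hf ihf => exact RecursiveInSet.rfind ihf

theorem RecursiveInSet.empty_iff_partrec {f : ℕ →. ℕ} :
    RecursiveInSet ∅ f ↔ Nat.Partrec f := by
  constructor
  · intro h
    induction h with
    | zero => exact Nat.Partrec.zero
    | succ => exact Nat.Partrec.succ
    | left => exact Nat.Partrec.left
    | right => exact Nat.Partrec.right
    | oracle =>
      have : ((fun n : ℕ => (∅ : Set ℕ).indicator 1 n) : ℕ →. ℕ) = (pure 0 : ℕ →. ℕ) := by
        funext n; rw [Set.indicator_empty]; rfl
      rw [this]; exact Nat.Partrec.zero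
    | pair hf hg ihf ihg => exact Nat.Partrec.pair ihf ihg
    | comp hf hg ihf ihg => exact Nat.Partrec.comp ihf ihg
    | prec hf hg ihf ihg => exact Nat.Partrec.prec ihf ihg
    | rfind hf ihf => exact Nat.Partrec.rfind ihf
  · exact RecursiveInSet.of_partrec

theorem RecursiveInSet.of_eq {A : Set ℕ} {f g : ℕ →. ℕ} (h : RecursiveInSet A f)
    (H : ∀ n, f n = g n) : RecursiveInSet A g := by
  have : f = g := funext H
  rwa [this] at h

open Nat.Partrec (Code)

/-- the oracle given by a (coded) finite list, diverging out of range -/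
def listO (m : ℕ) : ℕ →. ℕ := fun i => ((Denumerable.ofNat (List ℕ) m)[i]? : Part ℕ)

private theorem massage_primrec :
    Nat.Primrec fun w => Nat.pair w.unpair.1.unpair.1 (Nat.pair w.unpair.1.unpair.2 w.unpair.2) := by
  have h1 : Primrec fun w : ℕ => w.unpair.1.unpair.1 :=
    (Primrec.fst.comp Primrec.unpair).comp (Primrec.fst.comp Primrec.unpair)
  have h2 : Primrec fun w : ℕ => w.unpair.1.unpair.2 :=
    (Primrec.snd.comp Primrec.unpair).comp (Primrec.fst.comp Primrec.unpair)
  have h3 : Primrec fun w : ℕ => w.unpair.2 := Primrec.snd.comp Primrec.unpair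
  exact Primrec.nat_iff.1 (Primrec₂.natPair.comp h1 (Primrec₂.natPair.comp h2 h3))

private theorem rho_primrec :
    Nat.Primrec fun x => Nat.pair (Nat.pair x.unpair.1 x.unpair.2.unpair.1) x.unpair.2.unpair.2 := by
  have h1 : Primrec fun w : ℕ => w.unpair.1 := Primrec.fst.comp Primrec.unpair
  have h2 : Primrec fun w : ℕ => w.unpair.2.unpair.1 :=
    (Primrec.fst.comp Primrec.unpair).comp (Primrec.snd.comp Primrec.unpair)
  have h3 : Primrec fun w : ℕ => w.unpair.2.unpair.2 :=
    (Primrec.snd.comp Primrec.unpair).comp (Primrec.snd.comp Primrec.unpair)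
  exact Primrec.nat_iff.1 (Primrec₂.natPair.comp (Primrec₂.natPair.comp h1 h2) h3)

theorem evalo_list_partrec : ∀ c : Codeo,
    Nat.Partrec fun x : ℕ => evalo (listO x.unpair.1) c x.unpair.2 := by
  intro c
  induction c with
  | zero =>
    exact Nat.Partrec.zero.of_eq fun x => rfl
  | succ =>
    exact (Nat.Partrec.succ.comp Nat.Partrec.right).of_eq fun x => by
      exact Part.bind_some _ _
  | left =>
    exact (Nat.Partrec.left.comp Nat.Partrec.right).of_eq fun x => by
      exact Part.bind_some _ _
  | right =>
    exact (Nat.Partrec.right.comp Nat.Partrec.right).of_eq fun x => by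
      exact Part.bind_some _ _
  | oracle =>
    have : Computable fun x : ℕ => (Denumerable.ofNat (List ℕ) x.unpair.1)[x.unpair.2]? := by
      have hl : Primrec fun x : ℕ => Denumerable.ofNat (List ℕ) x.unpair.1 :=
        (Primrec.ofNat (List ℕ)).comp (Primrec.fst.comp Primrec.unpair)
      exact (Primrec.list_getElem?.comp hl (Primrec.snd.comp Primrec.unpair)).to_comp
    have := Computable.ofOption this
    exact (Partrec.nat_iff.1 this).of_eq fun x => by simp [evalo, listO]
  | pair cf cg ihf ihg =>
    exact (ihf.pair ihg).of_eq fun x => by simp [evalo]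
  | comp cf cg ihf ihg =>
    have hG : Nat.Partrec fun x : ℕ =>
        Nat.pair <$> (↑fun n : ℕ => n.unpair.1 : ℕ →. ℕ) x <*>
          evalo (listO x.unpair.1) cg x.unpair.2 :=
      Nat.Partrec.pair Nat.Partrec.left ihg
    refine (ihf.comp hG).of_eq fun x => ?_
    simp only [evalo]
    simp [Seq.seq, Part.bind_assoc, PFun.coe_val, Part.bind_some]
    rfl
  | prec cf cg ihf ihg =>
    have hg'' : Nat.Partrec fun w : ℕ => evalo (listO w.unpair.1.unpair.1) cg
        (Nat.pair w.unpair.1.unpair.2 w.unpair.2) := by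
      refine (ihg.comp (Nat.Partrec.of_primrec massage_primrec)).of_eq fun w => ?_
      simp
    have hprec := Nat.Partrec.prec ihf hg''
    refine (hprec.comp (Nat.Partrec.of_primrec rho_primrec)).of_eq fun x => ?_
    simp only [PFun.coe_val, Part.bind_eq_bind, Part.bind_some]
    simp [evalo, Nat.unpaired, Nat.unpair_pair]
  | rfind cf ihf =>
    have hf' : Nat.Partrec fun w : ℕ => evalo (listO w.unpair.1.unpair.1) cf
        (Nat.pair w.unpair.1.unpair.2 w.unpair.2) := by
      refine (ihf.comp (Nat.Partrec.of_primrec massage_primrec)).of_eq fun w => ?_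
      simp
    refine (Nat.Partrec.rfind hf').of_eq fun x => ?_
    simp [evalo]

theorem codeo_compile (c : Codeo) : ∃ c₂ : Code, ∀ (L : List ℕ) (n : ℕ),
    Code.eval c₂ (Nat.pair (Encodable.encode L) n) = evalo (fun i => (L[i]? : Part ℕ)) c n := by
  obtain ⟨c₂, hc₂⟩ := Nat.Partrec.Code.exists_code.1 (evalo_list_partrec c)
  refine ⟨c₂, fun L n => ?_⟩
  have h1 : listO (Encodable.encode L) = fun i => (L[i]? : Part ℕ) := by
    funext i; simp [listO, Denumerable.ofNat_encode]
  rw [hc₂]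
  simp only [Nat.unpair_pair]
  rw [h1]

/-! ### relativized computability toolkit -/

theorem computableIn_of_computable {A : Set ℕ} {f : ℕ → ℕ} (h : Computable f) :
    ComputableInSet A f := by
  have h' : Nat.Partrec ↑f := Partrec.nat_iff.1 h
  exact (RecursiveInSet.of_partrec h').of_eq fun n => rfl

theorem ComputableInSet.comp' {A : Set ℕ} {f g : ℕ → ℕ} (hf : ComputableInSet A f)
    (hg : ComputableInSet A g) : ComputableInSet A fun n => f (g n) :=
  (RecursiveInSet.comp hf hg).of_eq fun n => by
    simp [Part.bind_eq_bind, Part.bind_some]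

theorem ComputableInSet.pair' {A : Set ℕ} {f g : ℕ → ℕ} (hf : ComputableInSet A f)
    (hg : ComputableInSet A g) : ComputableInSet A fun n => Nat.pair (f n) (g n) :=
  (RecursiveInSet.pair hf hg).of_eq fun n => by
    simp [Seq.seq, Part.bind_eq_bind, Part.bind_some, Part.map_eq_map]

theorem chi_computableIn (A : Set ℕ) : ComputableInSet A (chi A) :=
  RecursiveInSet.oracle.of_eq fun n => by
    by_cases h : n ∈ A
    · rw [Set.indicator_of_mem h]
      have h2 : chi A n = 1 := by simp [chi, Set.indicator_of_mem h]
      rw [h2]; rfl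
    · rw [Set.indicator_of_notMem h]
      have h2 : chi A n = 0 := by simp [chi, Set.indicator_of_notMem h]
      rw [h2]; rfl

theorem RecursiveInSet.comp_total {A : Set ℕ} {p : ℕ →. ℕ} {g : ℕ → ℕ}
    (hp : RecursiveInSet A p) (hg : ComputableInSet A g) : RecursiveInSet A fun n => p (g n) :=
  (RecursiveInSet.comp hp hg).of_eq fun n => by
    exact Part.bind_some _ _

theorem RecursiveInSet.total_comp {A : Set ℕ} {p : ℕ →. ℕ} {g : ℕ → ℕ}
    (hp : RecursiveInSet A p) (hg : ComputableInSet A g) :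
    RecursiveInSet A fun n => (p n).map g :=
  (RecursiveInSet.comp hg hp).of_eq fun n => by
    show p n >>= (fun y => Part.some (g y)) = _
    exact Part.bind_some_eq_map _ _

theorem RecursiveInSet.keep {A : Set ℕ} {p : ℕ →. ℕ} (hp : RecursiveInSet A p) :
    RecursiveInSet A fun n => (p n).map (Nat.pair n) :=
  (RecursiveInSet.pair (computableIn_of_computable Computable.id) hp).of_eq fun n => by
    show Nat.pair <$> Part.some n <*> p n = _
    simp [Seq.seq]

/-- relativized μ-operator returning least `m` with `f (pair x m) = 0` -/
theorem RecursiveInSet.mu {A : Set ℕ} {f : ℕ → ℕ} (hf : ComputableInSet A f) :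
    RecursiveInSet A fun x => Nat.rfind fun m => Part.some (decide (f (Nat.pair x m) = 0)) :=
  (RecursiveInSet.rfind (f := fun n => Part.some (f n)) hf).of_eq fun x => by
    simp [Part.map_eq_map]

/-! ### the encoded prefix of `chi A` is `A`-computable -/

theorem pfx_computableIn (A : Set ℕ) :
    ComputableInSet A fun j => Encodable.encode ((List.range j).map (chi A)) := by
  classical
  -- reversed prefix, built by primitive recursion
  set rp : ℕ → ℕ := fun j => Encodable.encode (((List.range j).map (chi A)).reverse) with hrp
  have hproj1 : Computable fun x : ℕ => x.unpair.2.unpair.1 :=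
    ((Primrec.fst.comp Primrec.unpair).comp (Primrec.snd.comp Primrec.unpair)).to_comp
  have hproj2 : Computable fun x : ℕ => x.unpair.2.unpair.2 :=
    ((Primrec.snd.comp Primrec.unpair).comp (Primrec.snd.comp Primrec.unpair)).to_comp
  set gstep : ℕ → ℕ := fun x =>
    Nat.pair (chi A x.unpair.2.unpair.1) x.unpair.2.unpair.2 + 1 with hgstepdef
  have hgstep : ComputableInSet A gstep := by
    have h1 : ComputableInSet A fun x => chi A x.unpair.2.unpair.1 :=
      (chi_computableIn A).comp' (computableIn_of_computable hproj1)
    have h2 := (h1.pair' (computableIn_of_computable hproj2))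
    exact (computableIn_of_computable Computable.succ).comp' h2
  have hP := RecursiveInSet.prec (A := A) (f := pure 0) (g := fun n => Part.some (gstep n))
    RecursiveInSet.zero hgstep
  have claim : ∀ j : ℕ, (Nat.unpaired fun a n =>
      n.rec ((pure 0 : ℕ →. ℕ) a) fun y IH => do
        let i ← IH; (fun n => Part.some (gstep n)) (Nat.pair a (Nat.pair y i))) (Nat.pair 0 j)
      = Part.some (rp j) := by
    intro j
    induction j with
    | zero => simp [Nat.unpaired, Nat.unpair_pair, hrp]; rfl
    | succ k ih =>
      simp only [Nat.unpaired, Nat.unpair_pair] at ih ⊢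
      rw [ih]
      simp only [Part.bind_eq_bind, Part.bind_some]
      congr 1
      rw [hgstepdef]
      simp only [Nat.unpair_pair, hrp]
      rw [List.range_succ, List.map_append, List.reverse_append]
      simp [Encodable.encode_list_cons]
  have hrpc : ComputableInSet A rp := by
    have hpair0 : Computable fun j : ℕ => Nat.pair 0 j :=
      (Primrec₂.natPair.comp (Primrec.const 0) Primrec.id).to_comp
    have := hP.comp_total (computableIn_of_computable hpair0)
    exact this.of_eq fun j => claim j
  have hplain : Computable fun l : ℕ =>
      Encodable.encode ((Denumerable.ofNat (List ℕ) l).reverse) :=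
    (Primrec.encode.comp (Primrec.list_reverse.comp (Primrec.ofNat (List ℕ)))).to_comp
  have := (computableIn_of_computable hplain).comp' hrpc
  exact this.of_eq fun j => by
    simp [hrp, Denumerable.ofNat_encode]

/-! ### stage approximations and the fixed-point function -/

def chiS (cA : Code) (s i : ℕ) : ℕ := cond (Code.evaln s cA i).isSome 1 0

def pfxS (cA : Code) (s j : ℕ) : List ℕ := (List.range j).map (chiS cA s)

def tstS (cA c₂ : Code) (s m n : ℕ) : Option ℕ :=
  Code.evaln m.unpair.2 c₂ (Nat.pair (Encodable.encode (pfxS cA s m.unpair.1)) n)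

noncomputable def tstT (A : Set ℕ) (c₂ : Code) (m n : ℕ) : Option ℕ :=
  Code.evaln m.unpair.2 c₂
    (Nat.pair (Encodable.encode ((List.range m.unpair.1).map (chi A))) n)

theorem chiS_prim (cA : Code) : Primrec₂ (chiS cA) := by
  have h1 : Primrec fun p : ℕ × ℕ => Code.evaln p.1 cA p.2 :=
    Nat.Partrec.Code.primrec_evaln.comp ((Primrec.fst.pair (Primrec.const cA)).pair Primrec.snd)
  exact (Primrec.cond (Primrec.option_isSome.comp h1) (Primrec.const 1) (Primrec.const 0)).to₂

theorem pfxS_prim (cA : Code) : Primrec₂ fun s j => Encodable.encode (pfxS cA s j) := by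
  have h1 : Primrec₂ fun (p : ℕ × ℕ) (i : ℕ) => chiS cA p.1 i :=
    ((chiS_prim cA).comp (Primrec.fst.comp Primrec.fst) Primrec.snd).to₂
  have h2 : Primrec fun p : ℕ × ℕ => pfxS cA p.1 p.2 :=
    Primrec.list_map (Primrec.list_range.comp Primrec.snd) h1
  exact (Primrec.encode.comp h2).to₂

theorem tstS_prim (cA c₂ : Code) :
    Primrec fun q : (ℕ × ℕ) × ℕ => tstS cA c₂ q.1.1 q.1.2 q.2 := by
  have hk : Primrec fun q : (ℕ × ℕ) × ℕ => q.1.2.unpair.2 :=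
    (Primrec.snd.comp Primrec.unpair).comp (Primrec.snd.comp Primrec.fst)
  have hl : Primrec fun q : (ℕ × ℕ) × ℕ => Encodable.encode (pfxS cA q.1.1 q.1.2.unpair.1) :=
    (pfxS_prim cA).comp (Primrec.fst.comp Primrec.fst)
      ((Primrec.fst.comp Primrec.unpair).comp (Primrec.snd.comp Primrec.fst))
  have harg : Primrec fun q : (ℕ × ℕ) × ℕ =>
      Nat.pair (Encodable.encode (pfxS cA q.1.1 q.1.2.unpair.1)) q.2 :=
    Primrec₂.natPair.comp hl Primrec.snd
  exact Nat.Partrec.Code.primrec_evaln.comp ((hk.pair (Primrec.const c₂)).pair harg)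

theorem psi_exists (cA c₂ : Code) {u : ℕ → ℕ} (hu : Computable u) :
    ∃ cst : Code, ∀ e : ℕ, Code.eval cst e =
      (Nat.rfind fun s => Part.some (Code.evaln s (Denumerable.ofNat Code e) e).isSome) >>=
        fun s => (Nat.rfind fun m =>
            Part.some (tstS cA c₂ s m (u (Nat.pair (Encodable.encode cst) e))).isSome) >>=
          fun m => Part.ofOption (tstS cA c₂ s m (u (Nat.pair (Encodable.encode cst) e))) := by
  -- the parametrized function
  set F : Code → ℕ →. ℕ := fun d e =>
    (Nat.rfind fun s => Part.some (Code.evaln s (Denumerable.ofNat Code e) e).isSome) >>=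
      fun s => (Nat.rfind fun m =>
          Part.some (tstS cA c₂ s m (u (Nat.pair (Encodable.encode d) e))).isSome) >>=
        fun m => Part.ofOption (tstS cA c₂ s m (u (Nat.pair (Encodable.encode d) e))) with hF
  have hhalt : _root_.Partrec fun e : ℕ =>
      Nat.rfind fun s => Part.some (Code.evaln s (Denumerable.ofNat Code e) e).isSome := by
    apply Partrec.rfind
    have hg : Computable fun p : ℕ × ℕ =>
        (Code.evaln p.2 (Denumerable.ofNat Code p.1) p.1).isSome :=
      (Primrec.option_isSome.comp (Nat.Partrec.Code.primrec_evaln.comp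
        ((Primrec.snd.pair ((Primrec.ofNat Code).comp Primrec.fst)).pair Primrec.fst))).to_comp
    exact (hg.partrec.of_eq fun p => rfl).to₂
  have hsearch : Partrec fun q : ℕ × ℕ =>
      (Nat.rfind fun m => Part.some (tstS cA c₂ q.1 m q.2).isSome) >>=
        fun m => Part.ofOption (tstS cA c₂ q.1 m q.2) := by
    have htst : Computable fun r : (ℕ × ℕ) × ℕ => tstS cA c₂ r.1.1 r.2 r.1.2 :=
      ((tstS_prim cA c₂).comp (((Primrec.fst.comp Primrec.fst).pair Primrec.snd).pair
        (Primrec.snd.comp Primrec.fst))).to_comp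
    have hrf : Partrec fun q : ℕ × ℕ =>
        Nat.rfind fun m => Part.some (tstS cA c₂ q.1 m q.2).isSome := by
      apply Partrec.rfind
      exact (((Primrec.option_isSome.to_comp.comp htst).partrec).of_eq fun p => rfl).to₂
    exact hrf.bind ((Computable.ofOption htst).to₂)
  have hF2 : Partrec₂ F := by
    have huu : Computable fun p : Code × ℕ => u (Nat.pair (Encodable.encode p.1) p.2) :=
      hu.comp ((Primrec₂.natPair.comp (Primrec.encode.comp Primrec.fst) Primrec.snd).to_comp)
    have h1 : Partrec fun p : Code × ℕ =>
        Nat.rfind fun s => Part.some (Code.evaln s (Denumerable.ofNat Code p.2) p.2).isSome :=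
      hhalt.comp Computable.snd
    have h2 : Partrec₂ fun (p : Code × ℕ) (s : ℕ) =>
        (Nat.rfind fun m =>
            Part.some (tstS cA c₂ s m (u (Nat.pair (Encodable.encode p.1) p.2))).isSome) >>=
          fun m => Part.ofOption (tstS cA c₂ s m (u (Nat.pair (Encodable.encode p.1) p.2))) :=
      (hsearch.comp (Computable.snd.pair (huu.comp Computable.fst))).to₂
    exact (h1.bind h2).to₂
  obtain ⟨cst, hcst⟩ := Nat.Partrec.Code.fixed_point₂ hF2
  exact ⟨cst, fun e => by rw [hcst]⟩

/-! ### approximation facts -/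

section approx

variable {A : Set ℕ} {cA : Code}
  (hmemA : ∀ i, i ∈ A ↔ ∃ s, (Code.evaln s cA i).isSome)

theorem chi_eq_one {i : ℕ} (h : i ∈ A) : chi A i = 1 := by
  simp [chi, Set.indicator_of_mem h]

theorem chi_eq_zero {i : ℕ} (h : i ∉ A) : chi A i = 0 := by
  simp [chi, Set.indicator_of_notMem h]

include hmemA in
theorem chiS_stable {s t i : ℕ} (hst : s ≤ t) (h : chiS cA s i = chi A i) :
    chiS cA t i = chi A i := by
  by_cases hs : (Code.evaln s cA i).isSome
  · obtain ⟨y, hy⟩ := Option.isSome_iff_exists.1 hs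
    have ht : (Code.evaln t cA i).isSome := Option.isSome_iff_exists.2
      ⟨y, Nat.Partrec.Code.evaln_mono hst hy⟩
    have e1 : chiS cA t i = 1 := by simp [chiS, ht]
    have e2 : chiS cA s i = 1 := by simp [chiS, hs]
    rw [e1, ← h, e2]
  · have h0 : chiS cA s i = 0 := by simp [chiS, hs]
    rw [h0] at h
    have hnotA : i ∉ A := by
      intro hA
      have h1 : chi A i = 1 := chi_eq_one hA
      rw [← h] at h1; exact absurd h1 (by norm_num)
    have : ¬(Code.evaln t cA i).isSome := by
      intro hsome
      exact hnotA ((hmemA i).2 ⟨t, hsome⟩)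
    simp [chiS, this, ← h]

include hmemA in
theorem chiS_exists (i : ℕ) : ∃ s, chiS cA s i = chi A i := by
  by_cases h : i ∈ A
  · obtain ⟨s, hs⟩ := (hmemA i).1 h
    exact ⟨s, by simp [chiS, hs, chi_eq_one h]⟩
  · refine ⟨0, ?_⟩
    have : ¬(Code.evaln 0 cA i).isSome := by
      intro hsome; exact h ((hmemA i).2 ⟨0, hsome⟩)
    simp [chiS, this, chi_eq_zero h]

theorem pfx_eq_iff {s j : ℕ} :
    pfxS cA s j = (List.range j).map (chi A) ↔ ∀ i < j, chiS cA s i = chi A i := by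
  rw [pfxS, List.map_eq_map_iff]
  constructor
  · intro h i hij; exact h i (List.mem_range.2 hij)
  · intro h i hi; exact h i (List.mem_range.1 hi)

include hmemA in
theorem pfx_exists (j : ℕ) : ∃ t, pfxS cA t j = (List.range j).map (chi A) := by
  classical
  choose g hg using fun i : ℕ => chiS_exists hmemA i
  refine ⟨(Finset.range j).sup g, pfx_eq_iff.2 fun i hij => ?_⟩
  exact chiS_stable hmemA (Finset.le_sup (Finset.mem_range.2 hij)) (hg i)

include hmemA in
theorem pfx_stable {s t j : ℕ} (hst : s ≤ t)
    (h : pfxS cA s j = (List.range j).map (chi A)) :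
    pfxS cA t j = (List.range j).map (chi A) :=
  pfx_eq_iff.2 fun i hij => chiS_stable hmemA hst (pfx_eq_iff.1 h i hij)

theorem pfx_trunc {s j j' : ℕ} (h : pfxS cA s j = (List.range j).map (chi A))
    (hj : j' ≤ j) : pfxS cA s j' = (List.range j').map (chi A) :=
  pfx_eq_iff.2 fun i hij => pfx_eq_iff.1 h i (lt_of_lt_of_le hij hj)

end approx

/-- the oracle given by the length-`l` prefix of a total `g` is `restr ↑g l` -/
theorem listGet_restr (g : ℕ → ℕ) (l : ℕ) :
    (fun i => (((List.range l).map g)[i]? : Part ℕ)) = restr (↑g : ℕ →. ℕ) l := by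
  funext i
  by_cases h : i < l
  · rw [List.getElem?_map, List.getElem?_range h]
    simp [restr, h]
  · have hlen : ((List.range l).map g).length ≤ i := by
      simpa [List.length_map, List.length_range] using Nat.le_of_not_lt h
    rw [List.getElem?_eq_none hlen]
    simp [restr, h]

set_option maxHeartbeats 2000000 in
/-- Arslanov's completeness criterion for precomplete numberings:
if `A` is a Turing incomplete c.e. set and `γ` is precomplete, then every total
`A`-computable function has a fixpoint modulo `γ`. -/
theorem arslanov_precomplete (γ : ℕ → ℕ → Prop) (hγ : Equivalence γ)
    (A : Set ℕ) (hce : CEIn ∅ A) (hinc : ¬ TuringLE halting A)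
    (hpre : PrecompleteIn γ ∅)
    (f : ℕ → ℕ) (hf : ComputableInSet A f) : ∃ n : ℕ, γ (f n) n := by
  classical
  by_contra hcon
  push_neg at hcon
  apply hinc
  -- an enumeration of A
  obtain ⟨pA, hpA, hAdom⟩ := hce
  obtain ⟨cA, hcA⟩ := Nat.Partrec.Code.exists_code.1 (RecursiveInSet.empty_iff_partrec.1 hpA)
  have hmemA : ∀ i, i ∈ A ↔ ∃ s, (Code.evaln s cA i).isSome := by
    intro i
    constructor
    · intro hi
      have : (pA i).Dom := by rw [hAdom] at hi; exact hi
      obtain ⟨y, hy⟩ := Part.dom_iff_mem.1 this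
      rw [← hcA] at hy
      obtain ⟨k, hk⟩ := Nat.Partrec.Code.evaln_complete.1 hy
      exact ⟨k, Option.isSome_iff_exists.2 ⟨y, hk⟩⟩
    · rintro ⟨s, hs⟩
      obtain ⟨y, hy⟩ := Option.isSome_iff_exists.1 hs
      have h1 := Nat.Partrec.Code.evaln_sound (show y ∈ Code.evaln s cA i from hy)
      rw [hcA] at h1
      rw [hAdom]
      exact Part.dom_iff_mem.2 ⟨y, h1⟩
  -- a code for f relative to chi A, compiled to a plain code with list-oracle
  obtain ⟨c, hc⟩ := exists_codeo hf
  obtain ⟨c₂, hc₂⟩ := codeo_compile c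
  -- totalizer of the universal function
  have hU : RecursiveInSet ∅ fun m : ℕ =>
      Code.eval (Denumerable.ofNat Code m.unpair.1) m.unpair.2 := by
    apply RecursiveInSet.of_partrec
    apply Partrec.nat_iff.1
    exact Nat.Partrec.Code.eval_part.comp
      (((Primrec.ofNat Code).comp (Primrec.fst.comp Primrec.unpair)).to_comp)
      ((Primrec.snd.comp Primrec.unpair).to_comp)
  obtain ⟨u, hu, huγ⟩ := hpre _ hU
  have huC : Computable u := by
    have h1 := Partrec.nat_iff.2 (RecursiveInSet.empty_iff_partrec.1 hu)
    exact h1.of_eq fun n => rfl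
  -- the fixed point
  obtain ⟨cst, hcst⟩ := psi_exists cA c₂ huC
  set E : ℕ := Encodable.encode cst with hEdef
  set hfun : ℕ → ℕ := fun e => u (Nat.pair E e) with hfundef
  have hψγ : ∀ e y, y ∈ Code.eval cst e → γ y (hfun e) := by
    intro e y hy
    refine huγ (Nat.pair E e) y ?_
    simpa [Nat.unpair_pair, hEdef, Denumerable.ofNat_encode] using hy
  -- semantic facts about the true test
  have hevalT : ∀ (l nn : ℕ),
      Code.eval c₂ (Nat.pair (Encodable.encode ((List.range l).map (chi A))) nn)
        = evalo (restr (↑(chi A)) l) c nn := by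
    intro l nn
    rw [hc₂, listGet_restr]
  have hK1 : ∀ nn, ∃ m, (tstT A c₂ m nn).isSome := by
    intro nn
    have h1 : f nn ∈ evalo (↑(chi A)) c nn := by rw [hc]; exact Part.mem_some _
    obtain ⟨l, hl⟩ := evalo_use c nn (f nn) h1
    have h2 : f nn ∈ Code.eval c₂
        (Nat.pair (Encodable.encode ((List.range l).map (chi A))) nn) := by
      rw [hevalT]; exact hl
    obtain ⟨k, hk⟩ := Nat.Partrec.Code.evaln_complete.1 h2
    refine ⟨Nat.pair l k, ?_⟩
    unfold tstT
    rw [Nat.unpair_pair]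
    exact Option.isSome_iff_exists.2 ⟨f nn, hk⟩
  have hK2 : ∀ m nn y, tstT A c₂ m nn = Option.some y → y = f nn := by
    intro m nn y hy
    have h1 : y ∈ Code.eval c₂ (Nat.pair
        (Encodable.encode ((List.range m.unpair.1).map (chi A))) nn) :=
      Nat.Partrec.Code.evaln_sound (show y ∈ Code.evaln _ c₂ _ from hy)
    rw [hevalT] at h1
    have h2 := evalo_mono (restr_le (↑(chi A)) m.unpair.1) c nn y h1
    rw [hc] at h2
    exact Part.mem_some_iff.1 h2
  -- decision components
  have pu1 : Primrec fun z : ℕ => z.unpair.1 := Primrec.fst.comp Primrec.unpair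
  have pu2 : Primrec fun z : ℕ => z.unpair.2 := Primrec.snd.comp Primrec.unpair
  have hh : Computable hfun :=
    huC.comp ((Primrec₂.natPair.comp (Primrec.const E) Primrec.id).to_comp)
  -- f1 : test for the first search
  set f1v : ℕ → ℕ := fun w => cond (tstT A c₂ w.unpair.2 w.unpair.1.unpair.2).isSome 0 1
    with hf1vdef
  have hf1 : ComputableInSet A f1v := by
    set plain1 : ℕ → ℕ := fun z => cond (Code.evaln z.unpair.2.unpair.2.unpair.2 c₂
      (Nat.pair z.unpair.1 z.unpair.2.unpair.1.unpair.2)).isSome 0 1 with hplain1def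
    have hplain1 : Computable plain1 := by
      have hk : Primrec fun z : ℕ => z.unpair.2.unpair.2.unpair.2 :=
        pu2.comp (pu2.comp pu2)
      have hn : Primrec fun z : ℕ => z.unpair.2.unpair.1.unpair.2 :=
        pu2.comp (pu1.comp pu2)
      have hev : Primrec fun z : ℕ => Code.evaln z.unpair.2.unpair.2.unpair.2 c₂
          (Nat.pair z.unpair.1 z.unpair.2.unpair.1.unpair.2) :=
        Nat.Partrec.Code.primrec_evaln.comp
          ((hk.pair (Primrec.const c₂)).pair (Primrec₂.natPair.comp pu1 hn))
      exact (Primrec.cond (Primrec.option_isSome.comp hev)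
        (Primrec.const 0) (Primrec.const 1)).to_comp
    have harg : ComputableInSet A fun w : ℕ =>
        Nat.pair (Encodable.encode ((List.range w.unpair.2.unpair.1).map (chi A))) w :=
      ((pfx_computableIn A).comp'
        (computableIn_of_computable (pu1.comp pu2).to_comp)).pair'
        (computableIn_of_computable Computable.id)
    refine ((computableIn_of_computable hplain1).comp' harg).of_eq fun w => ?_
    rw [hplain1def, hf1vdef]
    unfold tstT
    simp [Nat.unpair_pair]
  -- f2 : test for the second search
  set f2v : ℕ → ℕ := fun w => if Encodable.encode (pfxS cA w.unpair.2 (w.unpair.1.unpair.2 + 1))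
      = Encodable.encode ((List.range (w.unpair.1.unpair.2 + 1)).map (chi A)) then 0 else 1
    with hf2vdef
  have hf2 : ComputableInSet A f2v := by
    set plain2 : ℕ → ℕ := fun z => if Encodable.encode (pfxS cA z.unpair.2.unpair.2
        (z.unpair.2.unpair.1.unpair.2 + 1)) = z.unpair.1 then 0 else 1 with hplain2def
    have hplain2 : Computable plain2 := by
      have hs : Primrec fun z : ℕ => z.unpair.2.unpair.2 := pu2.comp pu2
      have hj : Primrec fun z : ℕ => z.unpair.2.unpair.1.unpair.2 + 1 :=
        Primrec.succ.comp (pu2.comp (pu1.comp pu2))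
      have henc : Primrec fun z : ℕ =>
          Encodable.encode (pfxS cA z.unpair.2.unpair.2 (z.unpair.2.unpair.1.unpair.2 + 1)) :=
        (pfxS_prim cA).comp hs hj
      exact (Primrec.ite (Primrec.eq.comp henc pu1)
        (Primrec.const 0) (Primrec.const 1)).to_comp
    have harg : ComputableInSet A fun w : ℕ =>
        Nat.pair (Encodable.encode ((List.range (w.unpair.1.unpair.2 + 1)).map (chi A))) w :=
      ((pfx_computableIn A).comp' (computableIn_of_computable
        (Primrec.succ.comp (pu2.comp pu1)).to_comp)).pair'
        (computableIn_of_computable Computable.id)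
    refine ((computableIn_of_computable hplain2).comp' harg).of_eq fun w => ?_
    rw [hplain2def, hf2vdef]
    simp [Nat.unpair_pair]
  -- final answer function
  set q4 : ℕ → ℕ := fun z => cond (Code.evaln z.unpair.2
      (Denumerable.ofNat Code z.unpair.1.unpair.1.unpair.1)
      z.unpair.1.unpair.1.unpair.1).isSome 1 0 with hq4def
  have hq4 : ComputableInSet A q4 := by
    apply computableIn_of_computable
    have he : Primrec fun z : ℕ => z.unpair.1.unpair.1.unpair.1 :=
      pu1.comp (pu1.comp pu1)
    have hev : Primrec fun z : ℕ => Code.evaln z.unpair.2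
        (Denumerable.ofNat Code z.unpair.1.unpair.1.unpair.1)
        z.unpair.1.unpair.1.unpair.1 :=
      Nat.Partrec.Code.primrec_evaln.comp
        ((pu2.pair ((Primrec.ofNat Code).comp he)).pair he)
    exact (Primrec.cond (Primrec.option_isSome.comp hev)
      (Primrec.const 1) (Primrec.const 0)).to_comp
  -- the searches as partial functions
  set M : ℕ →. ℕ := fun x => Nat.rfind fun m => Part.some (decide (f1v (Nat.pair x m) = 0))
    with hMdef
  set T : ℕ →. ℕ := fun y => Nat.rfind fun s => Part.some (decide (f2v (Nat.pair y s) = 0))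
    with hTdef
  have hM : RecursiveInSet A M := RecursiveInSet.mu hf1
  have hT : RecursiveInSet A T := RecursiveInSet.mu hf2
  -- pipeline
  have hstep1 : ComputableInSet A fun e => Nat.pair e (hfun e) :=
    (computableIn_of_computable Computable.id).pair' (computableIn_of_computable hh)
  have hstage2 : RecursiveInSet A fun e =>
      (M (Nat.pair e (hfun e))).map (Nat.pair (Nat.pair e (hfun e))) :=
    hM.keep.comp_total hstep1
  have hstage3 : RecursiveInSet A fun e =>
      ((M (Nat.pair e (hfun e))).map (Nat.pair (Nat.pair e (hfun e)))) >>=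
        fun y => (T y).map (Nat.pair y) :=
    RecursiveInSet.comp hT.keep hstage2
  have hp : RecursiveInSet A fun e =>
      (((M (Nat.pair e (hfun e))).map (Nat.pair (Nat.pair e (hfun e)))) >>=
        fun y => (T y).map (Nat.pair y)) >>= fun z => Part.some (q4 z) :=
    RecursiveInSet.comp hq4 hstage3
  -- evaluate the pipeline
  refine hp.of_eq fun e => ?_
  have hex1 : ∃ m, (tstT A c₂ m (hfun e)).isSome := hK1 (hfun e)
  set m₀ : ℕ := Nat.find hex1 with hm₀def
  have hm₀some : (tstT A c₂ m₀ (hfun e)).isSome := Nat.find_spec hex1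
  have hm₀min : ∀ m < m₀, ¬(tstT A c₂ m (hfun e)).isSome := fun m hm => Nat.find_min hex1 hm
  have hMx : M (Nat.pair e (hfun e)) = Part.some m₀ := by
    rw [Part.eq_some_iff]
    simp only [hMdef]
    refine Nat.mem_rfind.2 ?_
    constructor
    · rw [Part.mem_some_iff]
      simp [hf1vdef, Nat.unpair_pair, hm₀some]
    · intro m hm
      rw [Part.mem_some_iff]
      simp [hf1vdef, Nat.unpair_pair, hm₀min m hm]
  have hex2 : ∃ s, pfxS cA s (m₀ + 1) = (List.range (m₀ + 1)).map (chi A) :=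
    pfx_exists hmemA (m₀ + 1)
  set t₀ : ℕ := Nat.find hex2 with ht₀def
  have ht₀spec : pfxS cA t₀ (m₀ + 1) = (List.range (m₀ + 1)).map (chi A) := Nat.find_spec hex2
  have hTy : T (Nat.pair (Nat.pair e (hfun e)) m₀) = Part.some t₀ := by
    rw [Part.eq_some_iff]
    simp only [hTdef]
    refine Nat.mem_rfind.2 ?_
    constructor
    · rw [Part.mem_some_iff]
      simp [hf2vdef, Nat.unpair_pair, ht₀spec]
    · intro s hs
      rw [Part.mem_some_iff]
      have := Nat.find_min hex2 hs
      simp [hf2vdef, Nat.unpair_pair, this]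
  rw [hMx]
  simp only [Part.map_eq_map, Part.map_some, Part.bind_eq_bind, Part.bind_some, hTy]
  congr 1
  -- final value analysis
  have hq4z : q4 (Nat.pair (Nat.pair (Nat.pair e (hfun e)) m₀) t₀)
      = cond (Code.evaln t₀ (Denumerable.ofNat Code e) e).isSome 1 0 := by
    rw [hq4def]
    simp [Nat.unpair_pair]
  by_cases he : e ∈ halting
  · -- e halts: show the computation halts within t₀ steps
    have hisSome : (Code.evaln t₀ (Denumerable.ofNat Code e) e).isSome := by
      by_contra hnot
      have hdomE : ∃ s, (Code.evaln s (Denumerable.ofNat Code e) e).isSome := by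
        obtain ⟨y, hy⟩ := Part.dom_iff_mem.1 (show (phi e e).Dom from he)
        obtain ⟨k, hk⟩ := Nat.Partrec.Code.evaln_complete.1 hy
        exact ⟨k, Option.isSome_iff_exists.2 ⟨y, hk⟩⟩
      set s₀ : ℕ := Nat.find hdomE with hs₀def
      have hs₀spec := Nat.find_spec hdomE
      have hts : t₀ ≤ s₀ := by
        by_contra hlt
        push_neg at hlt
        obtain ⟨y, hy⟩ := Option.isSome_iff_exists.1 hs₀spec
        exact hnot (Option.isSome_iff_exists.2
          ⟨y, Nat.Partrec.Code.evaln_mono (le_of_lt hlt) hy⟩)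
      -- oracle prefixes agree at stage s₀
      have hpfxs : pfxS cA s₀ (m₀ + 1) = (List.range (m₀ + 1)).map (chi A) :=
        pfx_stable hmemA hts ht₀spec
      have htsteq : ∀ m, m ≤ m₀ → tstS cA c₂ s₀ m (hfun e) = tstT A c₂ m (hfun e) := by
        intro m hm
        unfold tstS tstT pfxS
        have h1 : pfxS cA s₀ m.unpair.1 = (List.range m.unpair.1).map (chi A) :=
          pfx_trunc hpfxs (le_trans (Nat.unpair_left_le m) (le_trans hm (Nat.le_succ _)))
        unfold pfxS at h1
        rw [h1]
      -- the fixed point converges to f (hfun e)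
      have hfmem : f (hfun e) ∈ Code.eval cst e := by
        rw [hcst e]
        simp only [Part.bind_eq_bind, Part.mem_bind_iff]
        refine ⟨s₀, ?_, ?_⟩
        · refine Nat.mem_rfind.2 ?_
          constructor
          · rw [Part.mem_some_iff]
            exact hs₀spec.symm
          · intro m hm
            rw [Part.mem_some_iff]
            have := Nat.find_min hdomE hm
            simpa using this
        · refine ⟨m₀, ?_, ?_⟩
          · refine Nat.mem_rfind.2 ?_
            constructor
            · rw [Part.mem_some_iff, htsteq m₀ le_rfl]
              exact hm₀some.symm
            · intro m hm
              rw [Part.mem_some_iff, htsteq m (le_of_lt hm)]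
              simpa using hm₀min m hm
          · rw [htsteq m₀ le_rfl]
            obtain ⟨v, hv⟩ := Option.isSome_iff_exists.1 hm₀some
            rw [hv]
            have hveq := hK2 m₀ (hfun e) v hv
            rw [hveq]
            simp
      exact absurd (hψγ e (f (hfun e)) hfmem) (hcon (hfun e))
    rw [hq4z, hisSome, chi_eq_one he]
    rfl
  · have hnot : ¬(Code.evaln t₀ (Denumerable.ofNat Code e) e).isSome := by
      intro hsome
      obtain ⟨y, hy⟩ := Option.isSome_iff_exists.1 hsome
      have := Nat.Partrec.Code.evaln_sound (show y ∈ Code.evaln t₀ _ e from hy)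
      exact he (Part.dom_iff_mem.2 ⟨y, this⟩)
    rw [hq4z, Bool.cond_eq_ite, if_neg hnot, chi_eq_zero he]
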